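/- In the finite-facet setting, with φ*(x) = min_i ( -(b/a)⟨x,ν_i⟩ - (1/a) ln λ_i ) and φ_*(x) = -(1/a) ln( Σ_i λ_i e^{b⟨x,ν_i⟩} ), one has for every x in the cell of index i₀: 0 ≤ φ*(x) - φ_*(x) ≤ (1/a) ln( 1 + Σ_{j≠i₀} (λ_j/λ_{i₀}) e^{-b δ dist(x,E)} ). In particular sup_{dist(x,E) ≥ l} |φ*(x) - φ_*(x)| → 0 as l → ∞. -/

import Mathlib

open scoped RealInnerProductSpace

lemma geom_aux {n k : ℕ} (ν : Fin k → EuclideanSpace ℝ (Fin n))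
    (hinj : Function.Injective ν) (δ : ℝ) (hδ : 0 < δ)
    (hδle : ∀ i j, i ≠ j → δ ≤ ‖ν i - ν j‖)
    (E : Set (EuclideanSpace ℝ (Fin n)))
    (hE : E = { x | ∃ i j, i ≠ j ∧ (∀ l, ⟪x, ν l⟫ ≤ ⟪x, ν i⟫) ∧ ⟪x, ν j⟫ = ⟪x, ν i⟫ })
    (x : EuclideanSpace ℝ (Fin n)) (i₀ : Fin k)
    (hmax : ∀ i, ⟪x, ν i⟫ ≤ ⟪x, ν i₀⟫) (j : Fin k) (hj : j ≠ i₀) :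
    δ * Metric.infDist x E ≤ ⟪x, ν i₀⟫ - ⟪x, ν j⟫ := by
  set w : EuclideanSpace ℝ (Fin n) := ν i₀ - ν j with hw
  have hwne : w ≠ 0 := sub_ne_zero.mpr (hinj.ne hj.symm)
  have hc : 0 < ‖w‖ := norm_pos_iff.mpr hwne
  set c : ℝ := ‖w‖ with hcdef
  set d : ℝ := ⟪x, ν i₀⟫ - ⟪x, ν j⟫ with hd
  have hdw : ⟪x, w⟫ = d := by rw [hw, inner_sub_right]
  have hd0 : 0 ≤ d := sub_nonneg.mpr (hmax j)
  set ts : ℝ := d / c with hts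
  have hts0 : 0 ≤ ts := div_nonneg hd0 hc.le
  set f : Fin k → ℝ → ℝ := fun l t => ⟪x, ν l⟫ - (t / c) * ⟪w, ν l⟫ with hf
  have hfcont : ∀ l, Continuous (f l) := fun l => by
    exact continuous_const.sub ((continuous_id.div_const c).mul continuous_const)
  set y : ℝ → EuclideanSpace ℝ (Fin n) := fun t => x - (t / c) • w with hy
  have hfy : ∀ l t, ⟪y t, ν l⟫ = f l t := fun l t => by
    simp [hy, hf, inner_sub_left, real_inner_smul_left, Finset.mul_sum, mul_assoc]
  set S : Set ℝ := Set.Icc 0 ts ∩ ⋂ l, {t | f l t ≤ f i₀ t} with hS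
  have hmemS : ∀ t, t ∈ S ↔ t ∈ Set.Icc 0 ts ∧ ∀ l, f l t ≤ f i₀ t := by
    intro t; simp [hS, Set.mem_iInter]
  have hS0 : (0 : ℝ) ∈ S := by
    rw [hmemS]
    refine ⟨⟨le_refl 0, hts0⟩, fun l => ?_⟩
    simp only [hf, zero_div, zero_mul, sub_zero]
    exact hmax l
  have hSb : BddAbove S := ⟨ts, fun t ht => ((hmemS t).mp ht).1.2⟩
  have hScl : IsClosed S := by
    refine IsClosed.inter isClosed_Icc (isClosed_iInter fun l => ?_)
    exact isClosed_le (hfcont l) (hfcont i₀)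
  set T : ℝ := sSup S with hT
  have hTS : T ∈ S := hScl.csSup_mem ⟨0, hS0⟩ hSb
  obtain ⟨hTIcc, hTmax⟩ := (hmemS T).mp hTS
  have hww : ⟪w, w⟫ = c * c := by
    rw [real_inner_self_eq_norm_mul_norm]
  have hfij : ∀ t, f i₀ t - f j t = d - (t / c) * (c * c) := by
    intro t
    simp only [hf]
    have h1 : ⟪w, ν i₀⟫ - ⟪w, ν j⟫ = c * c := by
      rw [← inner_sub_right, ← hww]
    have h2 : ⟪x, ν i₀⟫ - ⟪x, ν j⟫ = d := hd.symm
    linear_combination h2 - (t / c) * h1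
  have key : ∃ l, l ≠ i₀ ∧ f i₀ T ≤ f l T := by
    rcases eq_or_lt_of_le hTIcc.2 with hTt | hTt
    · refine ⟨j, hj, ?_⟩
      have := hfij T
      rw [hTt, hts] at this ⊢
      have : f i₀ (d / c) - f j (d / c) = 0 := by
        rw [hfij]
        field_simp
        ring
      linarith
    · set C : Set ℝ := ⋃ l ∈ {l : Fin k | l ≠ i₀}, {t | f i₀ t ≤ f l t} with hC
      have hCcl : IsClosed C := by
        refine Set.Finite.isClosed_biUnion (Set.toFinite _) fun l _ => ?_
        exact isClosed_le (hfcont i₀) (hfcont l)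
      have hsub : Set.Ioc T ts ⊆ C := by
        intro t ht
        have htS : t ∉ S := fun h => absurd (le_csSup hSb h) (not_le.mpr ht.1)
        have htIcc : t ∈ Set.Icc 0 ts := ⟨le_trans hTIcc.1 ht.1.le, ht.2⟩
        have : ¬ ∀ l, f l t ≤ f i₀ t := fun h => htS ((hmemS t).mpr ⟨htIcc, h⟩)
        push_neg at this
        obtain ⟨l, hl⟩ := this
        have hlne : l ≠ i₀ := fun h => by rw [h] at hl; exact lt_irrefl _ hl
        exact Set.mem_biUnion hlne hl.le
      have hTC : T ∈ C := by
        have h1 : T ∈ closure (Set.Ioc T ts) := by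
          rw [closure_Ioc hTt.ne]
          exact ⟨le_refl T, hTt.le⟩
        exact hCcl.closure_subset_iff.mpr hsub h1
      simp only [hC, Set.mem_iUnion, Set.mem_setOf_eq] at hTC
      obtain ⟨l, hl, hle⟩ := hTC
      exact ⟨l, hl, hle⟩
  obtain ⟨l, hl, hle⟩ := key
  have heq : f l T = f i₀ T := le_antisymm (hTmax l) hle
  have hyE : y T ∈ E := by
    rw [hE]
    refine ⟨i₀, l, hl.symm, fun m => ?_, ?_⟩
    · rw [hfy, hfy]; exact hTmax m
    · rw [hfy, hfy]; exact heq
  have hdist : Metric.infDist x E ≤ T := by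
    have h1 : Metric.infDist x E ≤ dist x (y T) := Metric.infDist_le_dist_of_mem hyE
    have h2 : dist x (y T) = T := by
      rw [dist_eq_norm]
      have : x - y T = (T / c) • w := by simp [hy]
      rw [this, norm_smul]
      rw [Real.norm_eq_abs, abs_of_nonneg (div_nonneg hTIcc.1 hc.le)]
      field_simp
      rfl
    linarith
  have hδc : δ ≤ c := hδle i₀ j hj.symm
  have hinfnn : 0 ≤ Metric.infDist x E := Metric.infDist_nonneg
  have : Metric.infDist x E ≤ d / c := le_trans hdist hTIcc.2
  calc δ * Metric.infDist x E ≤ c * (d / c) := by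
        apply mul_le_mul hδc this hinfnn hc.le
    _ = d := by field_simp

open Filter in
set_option maxHeartbeats 1000000 in
/-- In the finite-facet setting, on the cell where `⟪x,ν_{i₀}⟫` is maximal one has
`0 ≤ φ* - φ_* ≤ (1/a) ln(1 + Σ_{j≠i₀} (λ_j/λ_{i₀}) e^{-bδ dist(x,E)})`; in particular
`sup_{dist(x,E) ≥ l} |φ* - φ_*| → 0` as `l → ∞`. -/
theorem stmt_11 {n : ℕ} (k : ℕ) (hk : 2 ≤ k) (a b : ℝ) (ha : 0 < a) (hb : 0 < b)
    (ν : Fin k → EuclideanSpace ℝ (Fin n)) (hν : ∀ i, ‖ν i‖ = 1)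
    (hinj : Function.Injective ν)
    (lam : Fin k → ℝ) (hlam : ∀ i, 0 < lam i)
    (δ : ℝ) (hδ : 0 < δ) (hδle : ∀ i j, i ≠ j → δ ≤ ‖ν i - ν j‖)
    (E : Set (EuclideanSpace ℝ (Fin n)))
    (hE : E = { x | ∃ i j, i ≠ j ∧ (∀ l, ⟪x, ν l⟫ ≤ ⟪x, ν i⟫) ∧ ⟪x, ν j⟫ = ⟪x, ν i⟫ })
    (φsup φsub : EuclideanSpace ℝ (Fin n) → ℝ)
    (hφsup : ∀ x, φsup x = ⨅ i : Fin k, (-(b / a) * ⟪x, ν i⟫ - (1 / a) * Real.log (lam i)))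
    (hφsub : ∀ x, φsub x =
      -(1 / a) * Real.log (∑ i : Fin k, lam i * Real.exp (b * ⟪x, ν i⟫))) :
    (∀ x (i₀ : Fin k), (∀ i, ⟪x, ν i⟫ ≤ ⟪x, ν i₀⟫) →
      0 ≤ φsup x - φsub x ∧
      φsup x - φsub x ≤ (1 / a) * Real.log (1 + ∑ j ∈ Finset.univ.erase i₀,
        (lam j / lam i₀) * Real.exp (-(b * δ * Metric.infDist x E)))) ∧
    (∀ ε > 0, ∃ l : ℝ, ∀ x, l ≤ Metric.infDist x E → |φsup x - φsub x| ≤ ε) := by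
  haveI : Nonempty (Fin k) := ⟨⟨0, by omega⟩⟩
  have ha' : (0:ℝ) < 1 / a := one_div_pos.mpr ha
  have part1 : ∀ x (i₀ : Fin k), (∀ i, ⟪x, ν i⟫ ≤ ⟪x, ν i₀⟫) →
      0 ≤ φsup x - φsub x ∧
      φsup x - φsub x ≤ (1 / a) * Real.log (1 + ∑ j ∈ Finset.univ.erase i₀,
        (lam j / lam i₀) * Real.exp (-(b * δ * Metric.infDist x E))) := by
    intro x i₀ hmax
    set D := Metric.infDist x E with hD
    set Sg : ℝ := ∑ i : Fin k, lam i * Real.exp (b * ⟪x, ν i⟫) with hSg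
    have hSgpos : 0 < Sg :=
      Finset.sum_pos (fun i _ => mul_pos (hlam i) (Real.exp_pos _)) Finset.univ_nonempty
    have hterm : ∀ i : Fin k, lam i * Real.exp (b * ⟪x, ν i⟫) ≤ Sg := fun i =>
      Finset.single_le_sum (f := fun i => lam i * Real.exp (b * ⟪x, ν i⟫))
        (fun i _ => (mul_pos (hlam i) (Real.exp_pos _)).le) (Finset.mem_univ i)
    have hlow : φsub x ≤ φsup x := by
      rw [hφsub, hφsup]
      apply le_ciInf
      intro i
      have h1 : Real.log (lam i * Real.exp (b * ⟪x, ν i⟫)) ≤ Real.log Sg :=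
        Real.log_le_log (mul_pos (hlam i) (Real.exp_pos _)) (hterm i)
      rw [Real.log_mul (ne_of_gt (hlam i)) (Real.exp_ne_zero _), Real.log_exp] at h1
      have h2 := mul_le_mul_of_nonneg_left h1 ha'.le
      have e : -(b / a) * ⟪x, ν i⟫ - (1 / a) * Real.log (lam i)
          = -((1 / a) * (Real.log (lam i) + b * ⟪x, ν i⟫)) := by ring
      rw [e]
      linarith
    set R : ℝ := ∑ j ∈ Finset.univ.erase i₀,
        (lam j / lam i₀) * Real.exp (-(b * δ * D)) with hR
    have hR0 : 0 ≤ R := Finset.sum_nonneg fun j _ =>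
      mul_nonneg (div_nonneg (hlam j).le (hlam i₀).le) (Real.exp_pos _).le
    set P : ℝ := lam i₀ * Real.exp (b * ⟪x, ν i₀⟫) with hP
    have hPpos : 0 < P := mul_pos (hlam i₀) (Real.exp_pos _)
    have hSgle : Sg ≤ P * (1 + R) := by
      have hsplit : Sg = P + ∑ j ∈ Finset.univ.erase i₀, lam j * Real.exp (b * ⟪x, ν j⟫) :=
        (Finset.add_sum_erase _ _ (Finset.mem_univ i₀)).symm
      have hterm2 : ∀ j ∈ Finset.univ.erase i₀,
          lam j * Real.exp (b * ⟪x, ν j⟫) ≤ P * ((lam j / lam i₀) * Real.exp (-(b * δ * D))) := by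
        intro j hjm
        have hjne : j ≠ i₀ := Finset.ne_of_mem_erase hjm
        have hgeom := geom_aux ν hinj δ hδ hδle E hE x i₀ hmax j hjne
        rw [← hD] at hgeom
        have hexple : Real.exp (b * ⟪x, ν j⟫) ≤ Real.exp (b * ⟪x, ν i₀⟫ + (-(b * δ * D))) := by
          apply Real.exp_le_exp.mpr
          nlinarith [mul_le_mul_of_nonneg_left hgeom hb.le]
        calc lam j * Real.exp (b * ⟪x, ν j⟫)
            ≤ lam j * Real.exp (b * ⟪x, ν i₀⟫ + (-(b * δ * D))) :=
              mul_le_mul_of_nonneg_left hexple (hlam j).le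
          _ = P * ((lam j / lam i₀) * Real.exp (-(b * δ * D))) := by
              rw [Real.exp_add, hP]
              field_simp
              rw [eq_div_iff (ne_of_gt (hlam i₀))]
      calc Sg = P + ∑ j ∈ Finset.univ.erase i₀, lam j * Real.exp (b * ⟪x, ν j⟫) := hsplit
        _ ≤ P + ∑ j ∈ Finset.univ.erase i₀,
              P * ((lam j / lam i₀) * Real.exp (-(b * δ * D))) :=
            add_le_add_right (Finset.sum_le_sum hterm2) _
        _ = P + P * R := by rw [hR, Finset.mul_sum]
        _ = P * (1 + R) := by ring
    have hlog : Real.log Sg ≤ Real.log P + Real.log (1 + R) := by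
      have h := Real.log_le_log hSgpos hSgle
      rwa [Real.log_mul (ne_of_gt hPpos) (by positivity)] at h
    have hlogP : Real.log P = Real.log (lam i₀) + b * ⟪x, ν i₀⟫ := by
      rw [hP, Real.log_mul (ne_of_gt (hlam i₀)) (Real.exp_ne_zero _), Real.log_exp]
    have hsuple : φsup x ≤ -(b / a) * ⟪x, ν i₀⟫ - (1 / a) * Real.log (lam i₀) := by
      rw [hφsup]
      exact ciInf_le (Set.Finite.bddBelow (Set.finite_range _)) i₀
    have h3 : (1 / a) * Real.log Sg ≤ (1 / a) * (Real.log P + Real.log (1 + R)) :=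
      mul_le_mul_of_nonneg_left hlog ha'.le
    have e2 : -(b / a) * ⟪x, ν i₀⟫ - (1 / a) * Real.log (lam i₀) + (1 / a) * Real.log P
        = 0 := by rw [hlogP]; ring
    have hsub := hφsub x
    rw [← hSg] at hsub
    constructor
    · linarith
    · linarith
  refine ⟨part1, ?_⟩
  intro ε hε
  set C : ℝ := ∑ j : Fin k, ∑ i : Fin k, lam j / lam i with hC
  have hC0 : 0 ≤ C :=
    Finset.sum_nonneg fun j _ => Finset.sum_nonneg fun i _ =>
      div_nonneg (hlam j).le (hlam i).le
  have htend : Tendsto (fun t : ℝ => (1 / a) * C * Real.exp (-(b * δ) * t)) atTop (nhds 0) := by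
    have h1 : Tendsto (fun t : ℝ => -(b * δ) * t) atTop atBot := by
      rw [show (fun t : ℝ => -(b * δ) * t) = (fun t : ℝ => -((b * δ) * t)) by funext t; ring]
      exact tendsto_neg_atBot_iff.mpr (Tendsto.const_mul_atTop (mul_pos hb hδ) tendsto_id)
    have h2 := Real.tendsto_exp_atBot.comp h1
    have h3 := h2.const_mul ((1 / a) * C)
    simpa using h3
  have hev := htend.eventually_lt_const hε
  rw [Filter.eventually_atTop] at hev
  obtain ⟨l₀, hl₀⟩ := hev
  refine ⟨l₀, fun x hx => ?_⟩
  obtain ⟨i₀, hi₀⟩ := Finite.exists_max (fun i => ⟪x, ν i⟫)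
  obtain ⟨h1, h2⟩ := part1 x i₀ hi₀
  set D := Metric.infDist x E with hD
  set S : ℝ := ∑ j ∈ Finset.univ.erase i₀,
      (lam j / lam i₀) * Real.exp (-(b * δ * D)) with hS
  have hS0 : 0 ≤ S := Finset.sum_nonneg fun j _ =>
    mul_nonneg (div_nonneg (hlam j).le (hlam i₀).le) (Real.exp_pos _).le
  have hSle : S ≤ C * Real.exp (-(b * δ) * D) := by
    have hsum : (∑ j ∈ Finset.univ.erase i₀, lam j / lam i₀) ≤ C := by
      calc (∑ j ∈ Finset.univ.erase i₀, lam j / lam i₀)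
          ≤ ∑ j : Fin k, lam j / lam i₀ :=
            Finset.sum_le_sum_of_subset_of_nonneg (Finset.erase_subset _ _)
              (fun j _ _ => div_nonneg (hlam j).le (hlam i₀).le)
        _ ≤ C := Finset.sum_le_sum fun j _ =>
              Finset.single_le_sum (fun i _ => div_nonneg (hlam j).le (hlam i).le)
                (Finset.mem_univ i₀)
    have hexp : Real.exp (-(b * δ * D)) = Real.exp (-(b * δ) * D) := by ring_nf
    calc S = (∑ j ∈ Finset.univ.erase i₀, lam j / lam i₀) * Real.exp (-(b * δ * D)) := by
          rw [hS, Finset.sum_mul]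
      _ ≤ C * Real.exp (-(b * δ * D)) :=
          mul_le_mul_of_nonneg_right hsum (Real.exp_pos _).le
      _ = C * Real.exp (-(b * δ) * D) := by rw [hexp]
  have hloglin : Real.log (1 + S) ≤ S := by
    have := Real.log_le_sub_one_of_pos (show (0:ℝ) < 1 + S by linarith)
    linarith
  have hfin : (1 / a) * Real.log (1 + S) ≤ (1 / a) * C * Real.exp (-(b * δ) * D) := by
    have := mul_le_mul_of_nonneg_left (le_trans hloglin hSle) (le_of_lt (one_div_pos.mpr ha))
    linarith [this]
  have hlt := hl₀ D hx
  rw [abs_of_nonneg h1]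
  calc φsup x - φsub x ≤ (1 / a) * Real.log (1 + S) := h2
    _ ≤ (1 / a) * C * Real.exp (-(b * δ) * D) := hfin
    _ ≤ ε := hlt.le
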